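/- arXiv:2107.02432 — 2 statements merged into one kernel-verified Lean document; each statement's English description precedes it below -/
import Mathlib

section
/- Let A be a real d×n matrix, b ∈ ℝ^d, P a real m×n matrix, f : ℝ → ℝ convex and three times differentiable, ε > 0, R > 0, w ∈ ℝ^m, with resistances r_i = R^{−2}(f''(w_i) + ε·Φ(w)/m). Suppose there exists x* with A x* = b and ‖P x*‖_∞ ≤ R, and let Δ̃ attain the minimum of ∑_{i=1}^m r_i (PΔ)_i² over {Δ : AΔ = b}. Then ∑_{i=1}^m f''(w_i)·|(PΔ̃)_i| ≤ (1+ε)·R·Φ(w). -/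
open scoped BigOperators

lemma monotone_deriv_nonneg' {g : ℝ → ℝ} (hm : Monotone g) {x : ℝ}
    (hd : DifferentiableAt ℝ g x) : 0 ≤ deriv g x := by
  have h := hd.hasDerivAt
  rw [hasDerivAt_iff_tendsto_slope] at h
  have h2 : Filter.Tendsto (slope g x) (nhdsWithin x (Set.Ioi x)) (nhds (deriv g x)) :=
    h.mono_left (nhdsWithin_mono x (fun y hy => ne_of_gt hy))
  refine ge_of_tendsto h2 ?_
  filter_upwards [self_mem_nhdsWithin] with y hy
  rw [slope_def_field]
  exact div_nonneg (sub_nonneg.2 (hm hy.le)) (sub_nonneg.2 hy.le)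

/-- Lemma B.1 ('BoundLinear'): ∑ᵢ f''(wᵢ)·|(PΔ̃)ᵢ| ≤ (1+ε)·R·Φ(w). -/
theorem bound_linear
    (d n m : ℕ) (A : Matrix (Fin d) (Fin n) ℝ) (b : Fin d → ℝ)
    (P : Matrix (Fin m) (Fin n) ℝ) (f : ℝ → ℝ)
    (hconv : ConvexOn ℝ Set.univ f)
    (hf1 : Differentiable ℝ f) (hf2 : Differentiable ℝ (deriv f))
    (hf3 : Differentiable ℝ (deriv (deriv f)))
    (ε R : ℝ) (hε : 0 < ε) (hR : 0 < R)
    (w r : Fin m → ℝ)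
    (hr : ∀ i, r i = 1 / R ^ 2 *
      (deriv (deriv f) (w i) + ε * (∑ j, deriv (deriv f) (w j)) / m))
    (xstar : Fin n → ℝ) (hxA : A.mulVec xstar = b)
    (hxR : ‖P.mulVec xstar‖ ≤ R)
    (Δt : Fin n → ℝ) (hΔA : A.mulVec Δt = b)
    (hΔmin : ∀ Δ : Fin n → ℝ, A.mulVec Δ = b →
      (∑ i, r i * (P.mulVec Δt) i ^ 2) ≤ ∑ i, r i * (P.mulVec Δ) i ^ 2) :
    (∑ i, deriv (deriv f) (w i) * |(P.mulVec Δt) i|) ≤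
      (1 + ε) * R * ∑ i, deriv (deriv f) (w i) := by
  set c : Fin m → ℝ := fun i => deriv (deriv f) (w i) with hc
  set v : Fin m → ℝ := P.mulVec Δt with hv
  set u : Fin m → ℝ := P.mulVec xstar with hu
  -- nonnegativity of the second derivative
  have hmono : Monotone (deriv f) := by
    have := hconv.monotoneOn_deriv (fun x _ => hf1 x)
    rw [monotoneOn_univ] at this
    exact this
  have hcn : ∀ i, 0 ≤ c i := fun i => monotone_deriv_nonneg' hmono (hf2 (w i))
  set Φ : ℝ := ∑ j, c j with hΦdef
  have hΦ : 0 ≤ Φ := Finset.sum_nonneg fun i _ => hcn i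
  rcases Nat.eq_zero_or_pos m with hm | hm
  · subst hm
    simp
    exact mul_nonneg (mul_nonneg (by linarith) hR.le) hΦ
  have hmR : (0:ℝ) < m := by exact_mod_cast hm
  -- each |u i| ≤ R
  have huR : ∀ i, |u i| ≤ R := by
    intro i
    have h := norm_le_pi_norm u i
    rw [Real.norm_eq_abs] at h
    exact h.trans hxR
  · -- key resistance facts
    have hrval : ∀ i, R ^ 2 * r i = c i + ε * Φ / m := by
      intro i
      rw [hr i]
      field_simp
      ring
    have hrnn : ∀ i, 0 ≤ r i := by
      intro i
      rw [hr i]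
      have : 0 ≤ ε * Φ / m := by positivity
      have h2 : 0 ≤ c i + ε * Φ / m := by linarith [hcn i]
      positivity
    -- sum of resistances
    have hsumr : ∑ i, r i = 1 / R ^ 2 * (1 + ε) * Φ := by
      have : ∑ i, r i = 1 / R ^ 2 * ∑ i, (c i + ε * Φ / m) := by
        rw [Finset.mul_sum]
        exact Finset.sum_congr rfl fun i _ => hr i
      rw [this, Finset.sum_add_distrib, Finset.sum_const]
      simp only [Finset.card_univ, Fintype.card_fin, nsmul_eq_mul]
      rw [← hΦdef]
      field_simp
    -- Cauchy-Schwarz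
    have hCS : (∑ i, c i * |v i|) ^ 2 ≤ Φ * ∑ i, c i * v i ^ 2 := by
      have := Finset.sum_mul_sq_le_sq_mul_sq Finset.univ
        (fun i => Real.sqrt (c i)) (fun i => Real.sqrt (c i) * |v i|)
      calc (∑ i, c i * |v i|) ^ 2
          = (∑ i, Real.sqrt (c i) * (Real.sqrt (c i) * |v i|)) ^ 2 := by
            congr 1
            refine Finset.sum_congr rfl fun i _ => ?_
            rw [← mul_assoc, Real.mul_self_sqrt (hcn i)]
        _ ≤ (∑ i, Real.sqrt (c i) ^ 2) * ∑ i, (Real.sqrt (c i) * |v i|) ^ 2 := this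
        _ = Φ * ∑ i, c i * v i ^ 2 := by
            congr 1
            · exact Finset.sum_congr rfl fun i _ => Real.sq_sqrt (hcn i)
            · refine Finset.sum_congr rfl fun i _ => ?_
              rw [mul_pow, Real.sq_sqrt (hcn i), sq_abs]
    -- term bound c i ≤ R² r i
    have hstep : ∑ i, c i * v i ^ 2 ≤ R ^ 2 * ∑ i, r i * v i ^ 2 := by
      rw [Finset.mul_sum]
      refine Finset.sum_le_sum fun i _ => ?_
      have h1 : c i ≤ R ^ 2 * r i := by
        rw [hrval i]
        have : 0 ≤ ε * Φ / m := by positivity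
        linarith
      have := mul_le_mul_of_nonneg_right h1 (sq_nonneg (v i))
      linarith [this]
    -- optimality + boundedness of u
    have hopt : ∑ i, r i * v i ^ 2 ≤ ∑ i, r i * u i ^ 2 := hΔmin xstar hxA
    have hub : ∑ i, r i * u i ^ 2 ≤ (∑ i, r i) * R ^ 2 := by
      rw [Finset.sum_mul]
      refine Finset.sum_le_sum fun i _ => ?_
      have h1 : u i ^ 2 ≤ R ^ 2 := by
        rw [← sq_abs]
        exact pow_le_pow_left₀ (abs_nonneg _) (huR i) 2
      exact mul_le_mul_of_nonneg_left h1 (hrnn i)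
    -- combine
    have hfinal : (∑ i, c i * |v i|) ^ 2 ≤ (1 + ε) * R ^ 2 * Φ ^ 2 := by
      have h2 : ∑ i, c i * v i ^ 2 ≤ R ^ 2 * ((1 / R ^ 2 * (1 + ε) * Φ) * R ^ 2) := by
        calc ∑ i, c i * v i ^ 2 ≤ R ^ 2 * ∑ i, r i * v i ^ 2 := hstep
          _ ≤ R ^ 2 * ((∑ i, r i) * R ^ 2) := by
              have := hopt.trans hub
              exact mul_le_mul_of_nonneg_left this (sq_nonneg R)
          _ = R ^ 2 * ((1 / R ^ 2 * (1 + ε) * Φ) * R ^ 2) := by rw [hsumr]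
      have h3 : R ^ 2 * ((1 / R ^ 2 * (1 + ε) * Φ) * R ^ 2) = (1 + ε) * R ^ 2 * Φ := by
        field_simp
      rw [h3] at h2
      calc (∑ i, c i * |v i|) ^ 2 ≤ Φ * ((1 + ε) * R ^ 2 * Φ) := by
            refine hCS.trans ?_
            exact mul_le_mul_of_nonneg_left h2 hΦ
        _ = (1 + ε) * R ^ 2 * Φ ^ 2 := by ring
    have hLnn : 0 ≤ ∑ i, c i * |v i| :=
      Finset.sum_nonneg fun i _ => mul_nonneg (hcn i) (abs_nonneg _)
    have hRHSnn : 0 ≤ (1 + ε) * R * Φ := by positivity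
    have hsq : (∑ i, c i * |v i|) ^ 2 ≤ ((1 + ε) * R * Φ) ^ 2 := by
      nlinarith [hfinal, mul_nonneg (mul_nonneg hε.le (sq_nonneg R)) (sq_nonneg Φ)]
    have hkey : (∑ i, c i * |v i|) ≤ (1 + ε) * R * Φ := by
      calc (∑ i, c i * |v i|) = Real.sqrt ((∑ i, c i * |v i|) ^ 2) :=
            (Real.sqrt_sq hLnn).symm
        _ ≤ Real.sqrt (((1 + ε) * R * Φ) ^ 2) := Real.sqrt_le_sqrt hsq
        _ = (1 + ε) * R * Φ := Real.sqrt_sq hRHSnn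
    exact hkey
end

section
/- Let A be a real d×n matrix, b ∈ ℝ^d, P a real m×n matrix, f : ℝ → ℝ convex and three times differentiable, ε > 0, R > 0, τ > 0, and w ∈ ℝ^m with Φ(w) > 0. Let r_i = R^{−2}(f''(w_i) + ε·Φ(w)/m), suppose there exists x* with A x* = b and ‖P x*‖_∞ ≤ R, and let Δ̃ attain the minimum of ∑_i r_i (PΔ)_i² over {Δ : AΔ = b}. Let I be a nonempty subset of { i : |(PΔ̃)_i| ≥ R·τ }, and define r' by r'_i = r_i/(1+ε) for i ∈ I and r'_i = r_i otherwise. Then Ψ(r') ≤ Ψ(r)·(1 − ε²τ²/(2(1+ε)²·m)), where Ψ(s) = inf{ ∑_i s_i (PΔ)_i² : AΔ = b }. -/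
open scoped BigOperators
open Filter Topology

theorem mono_deriv_nonneg' {g : ℝ → ℝ} (hg : Monotone g) (hd : Differentiable ℝ g) (x : ℝ) :
    0 ≤ deriv g x := by
  have h := (hd x).hasDerivAt
  rw [hasDerivAt_iff_tendsto_slope] at h
  have h2 : Tendsto (slope g x) (𝓝[>] x) (𝓝 (deriv g x)) :=
    h.mono_left (nhdsWithin_mono _ fun y hy => ne_of_gt hy)
  refine ge_of_tendsto h2 ?_
  filter_upwards [self_mem_nhdsWithin] with y hy
  rw [slope_def_field]
  exact div_nonneg (sub_nonneg.2 (hg (le_of_lt hy))) (sub_nonneg.2 (le_of_lt hy))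

/-- Lemma 3.1, single width-reduction step, resistances decreased by (1+ε):
Ψ(r') ≤ Ψ(r)·(1 − ε²τ²/(2(1+ε)²·m)). -/
theorem psi_decrease_width_step
    (d n m : ℕ) (A : Matrix (Fin d) (Fin n) ℝ) (b : Fin d → ℝ)
    (P : Matrix (Fin m) (Fin n) ℝ) (f : ℝ → ℝ)
    (hconv : ConvexOn ℝ Set.univ f)
    (hf1 : Differentiable ℝ f) (hf2 : Differentiable ℝ (deriv f))
    (hf3 : Differentiable ℝ (deriv (deriv f)))
    (ε R τ : ℝ) (hε : 0 < ε) (hR : 0 < R) (hτ : 0 < τ)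
    (w : Fin m → ℝ) (hΦ : 0 < ∑ j, deriv (deriv f) (w j))
    (r : Fin m → ℝ)
    (hr : ∀ i, r i = 1 / R ^ 2 *
      (deriv (deriv f) (w i) + ε * (∑ j, deriv (deriv f) (w j)) / m))
    (xstar : Fin n → ℝ) (hxA : A.mulVec xstar = b)
    (hxR : ‖P.mulVec xstar‖ ≤ R)
    (Δt : Fin n → ℝ) (hΔA : A.mulVec Δt = b)
    (hΔmin : ∀ Δ : Fin n → ℝ, A.mulVec Δ = b →
      (∑ i, r i * (P.mulVec Δt) i ^ 2) ≤ ∑ i, r i * (P.mulVec Δ) i ^ 2)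
    (I : Finset (Fin m)) (hIne : I.Nonempty)
    (hIwidth : ∀ i ∈ I, R * τ ≤ |(P.mulVec Δt) i|)
    (r' : Fin m → ℝ)
    (hr'I : ∀ i ∈ I, r' i = r i / (1 + ε))
    (hr'nI : ∀ i ∉ I, r' i = r i) :
    sInf {v : ℝ | ∃ Δ : Fin n → ℝ, A.mulVec Δ = b ∧
        v = ∑ i, r' i * (P.mulVec Δ) i ^ 2} ≤
      sInf {v : ℝ | ∃ Δ : Fin n → ℝ, A.mulVec Δ = b ∧
        v = ∑ i, r i * (P.mulVec Δ) i ^ 2} *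
      (1 - ε ^ 2 * τ ^ 2 / (2 * (1 + ε) ^ 2 * m)) := by
  obtain ⟨i0, hi0⟩ := hIne
  have hm : 0 < m := i0.pos
  have hmR : (0:ℝ) < (m:ℝ) := by exact_mod_cast hm
  set Φ : ℝ := ∑ j, deriv (deriv f) (w j) with hΦdef
  have h1ε : (0:ℝ) < 1 + ε := by linarith
  -- second derivative nonneg
  have hconv' : Monotone (deriv f) := by
    have := hconv.monotoneOn_deriv (fun x _ => (hf1 x))
    intro a c hac
    exact this (Set.mem_univ a) (Set.mem_univ c) hac
  have hf''nn : ∀ x, 0 ≤ deriv (deriv f) x := mono_deriv_nonneg' hconv' hf2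
  -- positivity of r
  have hrpos : ∀ i, 0 < r i := by
    intro i
    rw [hr i]
    have h1 : 0 ≤ deriv (deriv f) (w i) := hf''nn _
    have h2 : 0 < ε * Φ / m := by positivity
    have h3 : 0 < 1 / R ^ 2 := by positivity
    nlinarith
  have hr'pos : ∀ i, 0 < r' i := by
    intro i
    by_cases hi : i ∈ I
    · rw [hr'I i hi]; exact div_pos (hrpos i) h1ε
    · rw [hr'nI i hi]; exact hrpos i
  set p : Fin m → ℝ := fun i => (P.mulVec Δt) i ^ 2 with hp
  have hpnn : ∀ i, 0 ≤ p i := fun i => sq_nonneg _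
  set S := {v : ℝ | ∃ Δ : Fin n → ℝ, A.mulVec Δ = b ∧
      v = ∑ i, r i * (P.mulVec Δ) i ^ 2} with hS
  set S' := {v : ℝ | ∃ Δ : Fin n → ℝ, A.mulVec Δ = b ∧
      v = ∑ i, r' i * (P.mulVec Δ) i ^ 2} with hS'
  set V : ℝ := ∑ i, r i * p i with hV
  -- S' lower bounded by 0
  have hbdd' : BddBelow S' := by
    refine ⟨0, fun v hv => ?_⟩
    obtain ⟨Δ, _, rfl⟩ := hv
    exact Finset.sum_nonneg fun i _ => mul_nonneg (hr'pos i).le (sq_nonneg _)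
  have hVmem : V ∈ S := ⟨Δt, hΔA, rfl⟩
  -- sInf S = V
  have hinfS : sInf S = V := by
    apply le_antisymm
    · exact csInf_le ⟨0, fun v hv => by
        obtain ⟨Δ, _, rfl⟩ := hv
        exact Finset.sum_nonneg fun i _ => mul_nonneg (hrpos i).le (sq_nonneg _)⟩ hVmem
    · apply le_csInf ⟨V, hVmem⟩
      rintro v ⟨Δ, hΔ, rfl⟩
      exact hΔmin Δ hΔ
  have hV' : sInf S' ≤ ∑ i, r' i * p i := csInf_le hbdd' ⟨Δt, hΔA, rfl⟩
  rw [hinfS]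
  -- compute the decrement
  set K : ℝ := ∑ i ∈ I, r i * p i with hK
  have hsplit : ∑ i, r' i * p i = V - (ε / (1 + ε)) * K := by
    have : ∀ i, r' i * p i = r i * p i - (if i ∈ I then (ε / (1 + ε)) * (r i * p i) else 0) := by
      intro i
      by_cases hi : i ∈ I
      · rw [hr'I i hi, if_pos hi]
        field_simp
        ring
      · rw [hr'nI i hi, if_neg hi]
        ring
    rw [Finset.sum_congr rfl fun i _ => this i, Finset.sum_sub_distrib]
    congr 1
    rw [Finset.sum_ite_mem, Finset.univ_inter, Finset.mul_sum]
  -- K lower bound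
  have hKterm : ∀ i ∈ I, ε * Φ * τ ^ 2 / m ≤ r i * p i := by
    intro i hi
    have hw := hIwidth i hi
    have hpge : R ^ 2 * τ ^ 2 ≤ p i := by
      have : (R * τ) ^ 2 ≤ |(P.mulVec Δt) i| ^ 2 := by
        apply pow_le_pow_left₀ (by positivity) hw
      rwa [sq_abs, mul_pow] at this
    have hrge : 1 / R ^ 2 * (ε * Φ / m) ≤ r i := by
      rw [hr i]
      have := hf''nn (w i)
      have h3 : 0 < 1 / R ^ 2 := by positivity
      nlinarith
    have h0 : 0 < 1 / R ^ 2 * (ε * Φ / m) := by positivity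
    calc ε * Φ * τ ^ 2 / m = (1 / R ^ 2 * (ε * Φ / m)) * (R ^ 2 * τ ^ 2) := by
          field_simp
      _ ≤ r i * p i := by
          apply mul_le_mul hrge hpge (by positivity) (hrpos i).le
  have hKge : ε * Φ * τ ^ 2 / m ≤ K := by
    calc ε * Φ * τ ^ 2 / m ≤ r i0 * p i0 := hKterm i0 hi0
      _ ≤ K := Finset.single_le_sum (fun i hi => mul_nonneg (hrpos i).le (hpnn i)) hi0
  -- V upper bound
  have hVle : V ≤ (1 + ε) * Φ := by
    have h1 : V ≤ ∑ i, r i * (P.mulVec xstar) i ^ 2 := hΔmin xstar hxA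
    have h2 : ∑ i, r i * (P.mulVec xstar) i ^ 2 ≤ ∑ i, r i * R ^ 2 := by
      apply Finset.sum_le_sum
      intro i _
      have hb : |(P.mulVec xstar) i| ≤ R := le_trans (by
        simpa using norm_le_pi_norm (P.mulVec xstar) i) hxR
      have : (P.mulVec xstar) i ^ 2 ≤ R ^ 2 := by
        rw [← sq_abs]
        exact pow_le_pow_left₀ (abs_nonneg _) hb 2
      nlinarith [hrpos i]
    have h3 : ∑ i, r i * R ^ 2 = (1 + ε) * Φ := by
      rw [← Finset.sum_mul]
      have hsum : ∑ i, r i = 1 / R ^ 2 * ((1 + ε) * Φ) := by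
        rw [Finset.sum_congr rfl fun i _ => hr i, ← Finset.mul_sum,
          Finset.sum_add_distrib, Finset.sum_const, Finset.card_univ, Fintype.card_fin]
        field_simp
        rw [nsmul_eq_mul, mul_div_assoc', mul_comm (m:ℝ), mul_div_assoc, div_self hmR.ne', mul_one, ← hΦdef]
        ring
      rw [hsum]
      field_simp
    linarith
  -- combine
  have hVnn : 0 ≤ V := Finset.sum_nonneg fun i _ => mul_nonneg (hrpos i).le (hpnn i)
  refine le_trans hV' ?_
  rw [hsplit]
  have hgoal : V * (ε ^ 2 * τ ^ 2 / (2 * (1 + ε) ^ 2 * m)) ≤ (ε / (1 + ε)) * K := by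
    have h1 : V * (ε ^ 2 * τ ^ 2 / (2 * (1 + ε) ^ 2 * m)) ≤
        (1 + ε) * Φ * (ε ^ 2 * τ ^ 2 / (2 * (1 + ε) ^ 2 * m)) := by
      apply mul_le_mul_of_nonneg_right hVle (by positivity)
    have h2 : (ε / (1 + ε)) * (ε * Φ * τ ^ 2 / m) ≤ (ε / (1 + ε)) * K := by
      apply mul_le_mul_of_nonneg_left hKge (by positivity)
    have h3 : (1 + ε) * Φ * (ε ^ 2 * τ ^ 2 / (2 * (1 + ε) ^ 2 * m)) ≤
        (ε / (1 + ε)) * (ε * Φ * τ ^ 2 / m) := by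
      have key : (1 + ε) * Φ * (ε ^ 2 * τ ^ 2 / (2 * (1 + ε) ^ 2 * m)) =
          (ε ^ 2 * Φ * τ ^ 2 / ((1 + ε) * m)) / 2 := by
        field_simp
      have key2 : (ε / (1 + ε)) * (ε * Φ * τ ^ 2 / m) =
          ε ^ 2 * Φ * τ ^ 2 / ((1 + ε) * m) := by
        field_simp
      have hx : 0 ≤ ε ^ 2 * Φ * τ ^ 2 / ((1 + ε) * m) := by positivity
      rw [key, key2]
      linarith
    linarith
  linarith
end
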